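/- Let d ≥ 1 and 1 ≤ k ≤ d be integers and let x ∈ ℝ^d. Then the expected squared Euclidean error of the (unscaled) random sparsifier satisfies the exact identity (1 / C(d,k)) · Σ_{ω ⊆ {1,…,d}, |ω| = k} ‖mask_ω(x) − x‖² = (1 − k/d)·‖x‖², where ‖·‖ is the Euclidean norm on ℝ^d. -/

import Mathlib

/-- The masked vector `mask ω x` has `j`-th coordinate `x j` if `j ∈ ω` and `0` otherwise. -/
def mask {d : ℕ} (ω : Finset (Fin d)) (x : EuclideanSpace ℝ (Fin d)) :
    EuclideanSpace ℝ (Fin d) :=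
  WithLp.toLp 2 (fun j => if j ∈ ω then x j else 0)

lemma mask_err {d : ℕ} (ω : Finset (Fin d)) (x : EuclideanSpace ℝ (Fin d)) :
    ‖mask ω x - x‖ ^ 2 = ∑ j ∈ ωᶜ, (x j) ^ 2 := by
  rw [EuclideanSpace.norm_eq, Real.sq_sqrt (by positivity)]
  rw [← Finset.sum_compl_add_sum ω]
  have h1 : ∀ j ∈ ω, ‖(mask ω x - x) j‖ ^ 2 = 0 := by
    intro j hj
    simp [mask, hj, PiLp.sub_apply]
  have h2 : ∀ j ∈ ωᶜ, ‖(mask ω x - x) j‖ ^ 2 = (x j) ^ 2 := by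
    intro j hj
    simp only [Finset.mem_compl] at hj
    simp [mask, hj, PiLp.sub_apply, sq_abs]
  rw [Finset.sum_congr rfl h1, Finset.sum_congr rfl h2]
  simp

theorem randk_unscaled_error (d k : ℕ) (hd : 1 ≤ d) (hk1 : 1 ≤ k) (hkd : k ≤ d)
    (x : EuclideanSpace ℝ (Fin d)) :
    ((d.choose k : ℝ))⁻¹ *
      ∑ ω ∈ Finset.powersetCard k (Finset.univ : Finset (Fin d)),
        ‖mask ω x - x‖ ^ 2 = (1 - (k : ℝ) / d) * ‖x‖ ^ 2 := by
  have hnorm : ‖x‖ ^ 2 = ∑ j, (x j) ^ 2 := by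
    rw [EuclideanSpace.norm_eq, Real.sq_sqrt (by positivity)]
    simp [sq_abs]
  have hsum : ∑ ω ∈ Finset.powersetCard k (Finset.univ : Finset (Fin d)),
      ‖mask ω x - x‖ ^ 2 = ((d-1).choose k : ℝ) * ∑ j, (x j) ^ 2 := by
    simp only [mask_err]
    have : ∀ ω ∈ Finset.powersetCard k (Finset.univ : Finset (Fin d)),
        ∑ j ∈ ωᶜ, (x j) ^ 2 = ∑ j, if j ∉ ω then (x j)^2 else 0 := by
      intro ω _
      rw [Finset.sum_ite, Finset.sum_const_zero, add_zero]
      congr 1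
      ext j; simp
    rw [Finset.sum_congr rfl this, Finset.sum_comm]
    rw [Finset.mul_sum]
    congr 1; ext j
    rw [Finset.sum_ite, Finset.sum_const_zero, add_zero, Finset.sum_const]
    have hcard : (Finset.powersetCard k (Finset.univ : Finset (Fin d))).filter
        (fun ω => j ∉ ω) = Finset.powersetCard k ({j}ᶜ : Finset (Fin d)) := by
      ext ω
      simp only [Finset.mem_filter, Finset.mem_powersetCard, Finset.subset_univ,
        true_and]
      constructor
      · rintro ⟨hc, hj⟩
        exact ⟨fun a ha => Finset.mem_compl.mpr (fun h => hj (Finset.mem_singleton.mp h ▸ ha)), hc⟩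
      · rintro ⟨hs, hc⟩
        exact ⟨hc, fun hj => by simpa using Finset.mem_compl.mp (hs hj)⟩
    rw [hcard, Finset.card_powersetCard]
    have : ({j}ᶜ : Finset (Fin d)).card = d - 1 := by
      simp [Finset.card_compl]
    rw [this, nsmul_eq_mul]
  rw [hsum, ← hnorm, ← mul_assoc]
  congr 1
  have hd0 : (d : ℝ) ≠ 0 := by positivity
  have hc0 : (d.choose k : ℝ) ≠ 0 := Nat.cast_ne_zero.mpr (Nat.choose_pos hkd).ne'
  have key : ((d-1).choose k : ℝ) * d = (d.choose k) * ((d : ℝ) - k) := by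
    have h1 : (d-1).choose k * ((d-1) + 1) = ((d-1)+1).choose k * ((d-1) + 1 - k) :=
      Nat.choose_mul_succ_eq (d-1) k
    rw [Nat.sub_add_cancel hd] at h1
    have h2 : ((d-1).choose k * d : ℝ) = (d.choose k * (d - k) : ℕ) := by exact_mod_cast h1
    rw [h2]
    push_cast [Nat.cast_sub hkd]
    ring
  field_simp
  linarith [key]
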